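/- Let W(t) = B(t) − tB(1) for t ∈ [0,1] be the Brownian bridge and define the standardized Brownian bridge X(t) = W(t)/√(t(1−t)) for t ∈ (0,1). Let r(t, t+s) = Cov(X(t), X(t+s)) for t, t+s ∈ (0,1). Then for every t ∈ (0,1), lim_{s→0, s≠0} (1 − r(t, t+s))/(|s|/(2t(1−t))) = 1. In other words, the standardized Brownian bridge is locally stationary with index α = 1 and local structure C_t(s) = |s|/(2t(1−t)). -/

import Mathlib

open MeasureTheory ProbabilityTheory Filter Real Topology

/-- A process `B : Ω → ℝ → ℝ` is a standard Brownian motion (on `[0,∞)`): it has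
continuous paths, starts at `0`, and is a centered Gaussian process with covariance
`Cov (B s, B t) = min s t`; the latter is expressed by requiring every finite linear
combination `∑ i, c i * B (t i)` (with nonnegative times) to be a centered Gaussian
variable with the corresponding variance. -/
def IsStandardBrownianMotion {Ω : Type*} [MeasureSpace Ω] (B : Ω → ℝ → ℝ) : Prop :=
  IsProbabilityMeasure (ℙ : Measure Ω) ∧
  (∀ ω, Continuous (B ω)) ∧
  (∀ ω, B ω 0 = 0) ∧
  ∀ (n : ℕ) (t c : Fin n → ℝ), (∀ i, 0 ≤ t i) →
    Measure.map (fun ω => ∑ i, c i * B ω (t i)) ℙ =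
      gaussianReal 0 (Real.toNNReal (∑ i, ∑ j, c i * c j * min (t i) (t j)))

section Aux

open Set
open scoped NNReal ENNReal

private lemma myInt_sq_exp {b : ℝ} (hb : 0 < b) :
    Integrable (fun x : ℝ => x ^ 2 * Real.exp (-b * x ^ 2)) := by
  have := integrable_rpow_mul_exp_neg_mul_sq hb (s := 2) (by norm_num)
  have he : (fun x : ℝ => x ^ (2:ℝ) * Real.exp (-b * x ^ 2))
      = (fun x : ℝ => x ^ 2 * Real.exp (-b * x ^ 2)) := by
    funext x
    rw [show (2:ℝ) = ((2:ℕ):ℝ) by norm_num, Real.rpow_natCast]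
  rwa [he] at this

private lemma myTendsto_mul_exp {b : ℝ} (hb : 0 < b) :
    Tendsto (fun x : ℝ => x * Real.exp (-b * x ^ 2)) atTop (𝓝 0) := by
  have hhalf : Tendsto (fun x : ℝ => Real.exp (-(1/2 : ℝ) * x)) atTop (𝓝 0) := by
    have := Real.tendsto_exp_neg_atTop_nhds_zero.comp
      (tendsto_id.const_mul_atTop (by norm_num : (0:ℝ) < 1/2))
    simpa [Function.comp_def, neg_mul] using this
  have h := (rpow_mul_exp_neg_mul_sq_isLittleO_exp_neg hb 1).isBigO.trans_tendsto hhalf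
  refine h.congr' ?_
  filter_upwards [eventually_ge_atTop (0:ℝ)] with x _hx
  rw [Real.rpow_one]

private lemma myIntegral_sq_exp {b : ℝ} (hb : 0 < b) :
    ∫ x : ℝ, x ^ 2 * Real.exp (-b * x ^ 2) = Real.sqrt (π / b) / (2 * b) := by
  have hb' : (2 : ℝ) * b ≠ 0 := by positivity
  have A : ∀ x : ℝ, HasDerivAt (fun x : ℝ => -(2 * b)⁻¹ * (x * Real.exp (-b * x ^ 2)))
      (x ^ 2 * Real.exp (-b * x ^ 2) - (2 * b)⁻¹ * Real.exp (-b * x ^ 2)) x := by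
    intro x
    have h1 : HasDerivAt (fun x : ℝ => -b * x ^ 2) (-b * (2 * x)) x := by
      simpa using ((hasDerivAt_pow 2 x).const_mul (-b))
    have h2 := ((hasDerivAt_id x).mul h1.exp).const_mul (-(2 * b)⁻¹)
    refine h2.congr_deriv ?_
    rw [id]
    field_simp
    ring
  have hexp : Integrable (fun x : ℝ => Real.exp (-b * x ^ 2)) := integrable_exp_neg_mul_sq hb
  have hf' : Integrable (fun x : ℝ =>
      x ^ 2 * Real.exp (-b * x ^ 2) - (2 * b)⁻¹ * Real.exp (-b * x ^ 2)) :=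
    (myInt_sq_exp hb).sub (hexp.const_mul _)
  have htop : Tendsto (fun x : ℝ => -(2 * b)⁻¹ * (x * Real.exp (-b * x ^ 2))) atTop (𝓝 0) := by
    simpa using (myTendsto_mul_exp hb).const_mul (-(2 * b)⁻¹)
  have hbot : Tendsto (fun x : ℝ => -(2 * b)⁻¹ * (x * Real.exp (-b * x ^ 2))) atBot (𝓝 0) := by
    have h2 : Tendsto (fun x : ℝ => x * Real.exp (-b * x ^ 2)) atBot (𝓝 0) := by
      have := ((myTendsto_mul_exp hb).comp tendsto_neg_atBot_atTop).neg
      simp only [Function.comp_def, neg_zero] at this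
      refine this.congr fun x => by ring_nf
    simpa using h2.const_mul (-(2 * b)⁻¹)
  have key := integral_of_hasDerivAt_of_tendsto A hf' hbot htop
  rw [sub_zero] at key
  have hsplit : ∫ x : ℝ, (x ^ 2 * Real.exp (-b * x ^ 2) - (2 * b)⁻¹ * Real.exp (-b * x ^ 2))
      = (∫ x : ℝ, x ^ 2 * Real.exp (-b * x ^ 2)) - (2 * b)⁻¹ * ∫ x : ℝ, Real.exp (-b * x ^ 2) := by
    rw [integral_sub (myInt_sq_exp hb) (hexp.const_mul _), integral_const_mul]
  rw [hsplit, integral_gaussian] at key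
  have : ∫ x : ℝ, x ^ 2 * Real.exp (-b * x ^ 2) = (2 * b)⁻¹ * Real.sqrt (π / b) := by linarith
  rw [this, inv_mul_eq_div]

private lemma myPdf_mul (w : ℝ≥0) (hw : w ≠ 0) (x : ℝ) :
    gaussianPDFReal 0 w x * x ^ 2
      = (Real.sqrt (2 * π * w))⁻¹ * (x ^ 2 * Real.exp (-(2 * (w:ℝ))⁻¹ * x ^ 2)) := by
  have hw' : (0:ℝ) < w := by exact_mod_cast pos_iff_ne_zero.mpr hw
  rw [gaussianPDFReal]
  have : -(x - 0) ^ 2 / (2 * (w:ℝ)) = -(2 * (w:ℝ))⁻¹ * x ^ 2 := by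
    field_simp
    ring
  rw [this]; ring

private lemma myGaussian_sq_integrable (w : ℝ≥0) :
    Integrable (fun x : ℝ => x ^ 2) (gaussianReal 0 w) := by
  by_cases hw : w = 0
  · rw [hw, gaussianReal_zero_var]
    refine ⟨by fun_prop, ?_⟩
    simp [HasFiniteIntegral, lintegral_dirac]
  · have hw' : (0:ℝ) < w := by exact_mod_cast pos_iff_ne_zero.mpr hw
    have hb : (0:ℝ) < (2 * (w:ℝ))⁻¹ := by positivity
    rw [gaussianReal_of_var_ne_zero 0 hw]
    have hmeas : Measurable fun x => (gaussianPDFReal 0 w x).toNNReal :=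
      (measurable_gaussianPDFReal 0 w).real_toNNReal
    have hd : gaussianPDF 0 w = fun x => ((gaussianPDFReal 0 w x).toNNReal : ℝ≥0∞) := rfl
    rw [hd, integrable_withDensity_iff_integrable_smul hmeas]
    have he : (fun x : ℝ => (gaussianPDFReal 0 w x).toNNReal • (x ^ 2))
        = fun x => (Real.sqrt (2 * π * w))⁻¹ * (x ^ 2 * Real.exp (-(2 * (w:ℝ))⁻¹ * x ^ 2)) := by
      funext x
      rw [NNReal.smul_def, Real.coe_toNNReal _ (gaussianPDFReal_nonneg 0 w x), smul_eq_mul,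
        myPdf_mul w hw x]
    rw [he]
    exact (myInt_sq_exp hb).const_mul _

private lemma myGaussian_sq_integral (w : ℝ≥0) :
    ∫ x, x ^ 2 ∂(gaussianReal 0 w) = w := by
  by_cases hw : w = 0
  · rw [hw, gaussianReal_zero_var, integral_dirac]
    simp
  · have hw' : (0:ℝ) < w := by exact_mod_cast pos_iff_ne_zero.mpr hw
    have hb : (0:ℝ) < (2 * (w:ℝ))⁻¹ := by positivity
    rw [gaussianReal_of_var_ne_zero 0 hw]
    have hmeas : Measurable fun x => (gaussianPDFReal 0 w x).toNNReal :=
      (measurable_gaussianPDFReal 0 w).real_toNNReal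
    have hd : gaussianPDF 0 w = fun x => ((gaussianPDFReal 0 w x).toNNReal : ℝ≥0∞) := rfl
    rw [hd, integral_withDensity_eq_integral_smul hmeas]
    have he : (fun x : ℝ => (gaussianPDFReal 0 w x).toNNReal • (x ^ 2))
        = fun x => (Real.sqrt (2 * π * w))⁻¹ * (x ^ 2 * Real.exp (-(2 * (w:ℝ))⁻¹ * x ^ 2)) := by
      funext x
      rw [NNReal.smul_def, Real.coe_toNNReal _ (gaussianPDFReal_nonneg 0 w x), smul_eq_mul,
        myPdf_mul w hw x]
    rw [he, integral_const_mul, myIntegral_sq_exp hb]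
    rw [show π / (2 * (w:ℝ))⁻¹ = 2 * π * w by field_simp]
    rw [show (2 * ((2:ℝ) * w)⁻¹) = (w:ℝ)⁻¹ by field_simp]
    have h0 : Real.sqrt (2 * π * (w:ℝ)) ≠ 0 := by positivity
    field_simp

variable {Ω : Type*} [MeasureSpace Ω]

private lemma myAEMeasurable {Y : Ω → ℝ} {w : ℝ≥0}
    (h : Measure.map Y ℙ = gaussianReal 0 w) : AEMeasurable Y ℙ := by
  by_contra hc
  rw [Measure.map_of_not_aemeasurable hc] at h
  have h1 : (gaussianReal 0 w) Set.univ = 1 := measure_univ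
  rw [← h] at h1
  simp at h1

private lemma mySqInt {Y : Ω → ℝ} {w : ℝ≥0}
    (h : Measure.map Y ℙ = gaussianReal 0 w) :
    Integrable (fun ω => Y ω ^ 2) (ℙ : Measure Ω) ∧ ∫ ω, Y ω ^ 2 ∂(ℙ : Measure Ω) = w := by
  have hm := myAEMeasurable h
  have hg : AEStronglyMeasurable (fun x : ℝ => x ^ 2) (Measure.map Y ℙ) := by fun_prop
  constructor
  · exact (integrable_map_measure hg hm).mp (h ▸ myGaussian_sq_integrable w)
  · rw [← integral_map hm hg, h, myGaussian_sq_integral]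

private lemma myMulInt {Y Z : Ω → ℝ} (hYm : AEMeasurable Y ℙ) (hZm : AEMeasurable Z ℙ)
    (hY : Integrable (fun ω => Y ω ^ 2) (ℙ : Measure Ω))
    (hZ : Integrable (fun ω => Z ω ^ 2) (ℙ : Measure Ω)) :
    Integrable (fun ω => Y ω * Z ω) (ℙ : Measure Ω) := by
  refine Integrable.mono' ((hY.add hZ).div_const 2) (hYm.mul hZm).aestronglyMeasurable ?_
  refine Filter.Eventually.of_forall fun ω => ?_
  rw [Real.norm_eq_abs, abs_mul]
  simp only [Pi.add_apply]
  nlinarith [sq_nonneg (|Y ω| - |Z ω|), abs_nonneg (Y ω), abs_nonneg (Z ω),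
    sq_abs (Y ω), sq_abs (Z ω)]

end Aux

/-- **Local stationarity of the standardized Brownian bridge.** Let
`W t = B t − t B 1` be the Brownian bridge, `X t = W t / √(t (1−t))` for `t ∈ (0,1)`
the standardized Brownian bridge, and `r (t, t+s) = Cov (X t, X (t+s))` (the process is
centered, so the covariance is `E[X t · X (t+s)]`). Then for every `t ∈ (0,1)`,
`(1 − r (t, t+s)) / (|s|/(2t(1−t))) → 1` as `s → 0`, `s ≠ 0`. That is, the standardized
Brownian bridge is locally stationary with index `α = 1` and local structure
`C_t s = |s|/(2t(1−t))`. -/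
theorem stmt12 {Ω : Type*} [MeasureSpace Ω]
    (B : Ω → ℝ → ℝ) (hB : IsStandardBrownianMotion B)
    (W : Ω → ℝ → ℝ) (hW : ∀ ω (t : ℝ), W ω t = B ω t - t * B ω 1)
    (X : Ω → ℝ → ℝ) (hX : ∀ ω (t : ℝ), X ω t = W ω t / Real.sqrt (t * (1 - t)))
    (r : ℝ → ℝ → ℝ)
    (hr : ∀ t₁ t₂ : ℝ, r t₁ t₂ = ∫ ω, X ω t₁ * X ω t₂ ∂(ℙ : Measure Ω))
    (t : ℝ) (ht : t ∈ Set.Ioo (0 : ℝ) 1) :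
    Tendsto (fun s : ℝ => (1 - r t (t + s)) / (|s| / (2 * t * (1 - t))))
      (𝓝[≠] (0 : ℝ)) (𝓝 1) := by
  obtain ⟨hP, hcont, h0, hlaw⟩ := hB
  -- covariance of B
  have covB : ∀ s u : ℝ, 0 ≤ s → 0 ≤ u →
      Integrable (fun ω => B ω s * B ω u) (ℙ : Measure Ω) ∧
        ∫ ω, B ω s * B ω u ∂(ℙ : Measure Ω) = min s u := by
    have law1 : ∀ s : ℝ, 0 ≤ s →
        Measure.map (fun ω => B ω s) ℙ = gaussianReal 0 s.toNNReal := by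
      intro s hs
      have := hlaw 1 ![s] ![1] (by intro i; fin_cases i; exact hs)
      simpa using this
    have law2 : ∀ s u : ℝ, 0 ≤ s → 0 ≤ u →
        Measure.map (fun ω => B ω s + B ω u) ℙ
          = gaussianReal 0 (s + u + 2 * min s u).toNNReal := by
      intro s u hs hu
      have := hlaw 2 ![s, u] ![1, 1] (by intro i; fin_cases i <;> assumption)
      rw [show s + u + 2 * min s u
        = min s s + min s u + (min u s + min u u) by
          rw [min_self, min_self, min_comm u s]; ring]
      simpa [Fin.sum_univ_two] using this
    intro s u hs hu
    have hYm := myAEMeasurable (law1 s hs)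
    have hZm := myAEMeasurable (law1 u hu)
    obtain ⟨hY2, hYv⟩ := mySqInt (law1 s hs)
    obtain ⟨hZ2, hZv⟩ := mySqInt (law1 u hu)
    obtain ⟨hS2, hSv⟩ := mySqInt (law2 s u hs hu)
    rw [Real.coe_toNNReal _ hs] at hYv
    rw [Real.coe_toNNReal _ hu] at hZv
    rw [Real.coe_toNNReal _ (by have := le_min hs hu; positivity)] at hSv
    have hmul := myMulInt hYm hZm hY2 hZ2
    refine ⟨hmul, ?_⟩
    have expand : (fun ω => (B ω s + B ω u) ^ 2)
        = fun ω => (B ω s ^ 2 + 2 * (B ω s * B ω u)) + B ω u ^ 2 := by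
      funext ω; ring
    rw [expand] at hSv
    have h2 : Integrable (fun ω => 2 * (B ω s * B ω u)) (ℙ : Measure Ω) := hmul.const_mul 2
    have h12 : Integrable (fun ω => B ω s ^ 2 + 2 * (B ω s * B ω u)) (ℙ : Measure Ω) :=
      hY2.add h2
    rw [integral_add h12 hZ2, integral_add hY2 h2, integral_const_mul] at hSv
    linarith
  -- covariance of W
  have covW : ∀ s u : ℝ, 0 ≤ s → s ≤ 1 → 0 ≤ u → u ≤ 1 →
      ∫ ω, W ω s * W ω u ∂(ℙ : Measure Ω) = min s u - s * u := by
    intro s u hs hs1 hu hu1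
    obtain ⟨i1, v1⟩ := covB s u hs hu
    obtain ⟨i2, v2⟩ := covB s 1 hs zero_le_one
    obtain ⟨i3, v3⟩ := covB 1 u zero_le_one hu
    obtain ⟨i4, v4⟩ := covB 1 1 zero_le_one zero_le_one
    have expand : (fun ω => W ω s * W ω u)
        = fun ω => (B ω s * B ω u - u * (B ω s * B ω 1) - s * (B ω 1 * B ω u))
            + (s * u) * (B ω 1 * B ω 1) := by
      funext ω
      rw [hW, hW]
      ring
    rw [expand]
    have ha : Integrable (fun ω => B ω s * B ω u - u * (B ω s * B ω 1)) (ℙ : Measure Ω) :=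
      i1.sub (i2.const_mul u)
    have hb : Integrable (fun ω => B ω s * B ω u - u * (B ω s * B ω 1)
        - s * (B ω 1 * B ω u)) (ℙ : Measure Ω) := ha.sub (i3.const_mul s)
    rw [integral_add hb (i4.const_mul _), integral_sub ha (i3.const_mul s),
      integral_sub i1 (i2.const_mul u), integral_const_mul, integral_const_mul,
      integral_const_mul, v1, v2, v3, v4]
    rw [min_eq_left hs1, min_eq_right hu1, min_self]
    ring
  obtain ⟨ht0, ht1⟩ := ht
  -- formula for r
  have hrform : ∀ u ∈ Set.Ioo (0:ℝ) 1,
      r t u = (min t u - t * u) / (Real.sqrt (t * (1 - t)) * Real.sqrt (u * (1 - u))) := by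
    intro u hu
    rw [hr]
    have expand : (fun ω => X ω t * X ω u)
        = fun ω => (W ω t * W ω u) / (Real.sqrt (t * (1 - t)) * Real.sqrt (u * (1 - u))) := by
      funext ω
      rw [hX, hX, div_mul_div_comm]
    rw [expand, integral_div, covW t u ht0.le ht1.le hu.1.le hu.2.le]
  -- the analytic limit
  obtain ⟨a, ha_def⟩ : ∃ a : ℝ, a = t * (1 - t) := ⟨_, rfl⟩
  obtain ⟨c, hc_def⟩ : ∃ c : ℝ, c = (1 - 2 * t) / 2 := ⟨_, rfl⟩
  obtain ⟨g, hg_def⟩ : ∃ g : ℝ → ℝ, g = fun s => Real.sqrt (a * ((t + s) * (1 - t - s))) :=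
    ⟨_, rfl⟩
  have ha : 0 < a := by
    rw [ha_def]; have : 0 < 1 - t := by linarith
    positivity
  have hg0 : g 0 = a := by
    rw [hg_def]
    simp only
    rw [show a * ((t + 0) * (1 - t - 0)) = a * a by rw [ha_def]; ring,
      Real.sqrt_mul_self ha.le]
  have hderiv : HasDerivAt g c 0 := by
    have h1 : HasDerivAt (fun s : ℝ => a * ((t + s) * (1 - t - s))) (a * (1 - 2 * t)) 0 := by
      have ht' : HasDerivAt (fun s : ℝ => t + s) 1 0 := (hasDerivAt_id 0).const_add t
      have hu' : HasDerivAt (fun s : ℝ => 1 - t - s) (-1) 0 := by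
        simpa using (hasDerivAt_id 0).const_sub (1 - t)
      have := (ht'.mul hu').const_mul a
      refine this.congr_deriv ?_
      ring
    have hne : a * ((t + 0) * (1 - t - 0)) ≠ 0 := by
      rw [show a * ((t + 0) * (1 - t - 0)) = a * a by rw [ha_def]; ring]
      positivity
    have h2 := (Real.hasDerivAt_sqrt hne).comp 0 h1
    rw [hg_def]
    have h3 : (fun s : ℝ => Real.sqrt (a * ((t + s) * (1 - t - s))))
        = Real.sqrt ∘ (fun s : ℝ => a * ((t + s) * (1 - t - s))) := rfl
    rw [h3]
    refine h2.congr_deriv ?_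
    rw [show a * ((t + 0) * (1 - t - 0)) = a * a by rw [ha_def]; ring,
      Real.sqrt_mul_self ha.le]
    rw [hc_def, ha_def]
    have htne : t ≠ 0 := ne_of_gt ht0
    have h1tne : (1 : ℝ) - t ≠ 0 := by linarith
    field_simp
  have hslope : Tendsto (fun s : ℝ => (g s - a - c * s) / s) (𝓝[≠] (0:ℝ)) (𝓝 0) := by
    have hsl := (hasDerivAt_iff_tendsto_slope.mp hderiv).sub_const c
    rw [sub_self] at hsl
    refine hsl.congr' ?_
    filter_upwards [self_mem_nhdsWithin] with s hs
    have hs0 : s ≠ 0 := hs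
    rw [slope_def_field, hg0]
    field_simp
    ring
  have habs : Tendsto (fun s : ℝ => (g s - a - c * s) / |s|) (𝓝[≠] (0:ℝ)) (𝓝 0) := by
    refine squeeze_zero_norm (fun s => ?_) (by simpa using hslope.norm)
    exact le_of_eq (by simp [Real.norm_eq_abs, abs_div, abs_abs])
  have hgc : Tendsto g (𝓝[≠] (0:ℝ)) (𝓝 a) := by
    have hcont' : Continuous g := by
      rw [hg_def]; exact Real.continuous_sqrt.comp (by fun_prop)
    have h := (hcont'.continuousAt (x := (0:ℝ))).tendsto
    rw [hg0] at h
    exact h.mono_left nhdsWithin_le_nhds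
  have hmain : Tendsto (fun s : ℝ => (2 * a / g s) * ((g s - a - c * s) / |s| + 1 / 2))
      (𝓝[≠] (0:ℝ)) (𝓝 1) := by
    have h1 : Tendsto (fun s : ℝ => 2 * a / g s) (𝓝[≠] (0:ℝ)) (𝓝 (2 * a / a)) :=
      tendsto_const_nhds.div hgc (ne_of_gt ha)
    have h2 := h1.mul (habs.add (tendsto_const_nhds (x := (1/2 : ℝ))))
    rw [show 2 * a / a * (0 + 1 / 2) = 1 by field_simp; norm_num] at h2
    exact h2
  refine hmain.congr' ?_
  have hev : ∀ᶠ s : ℝ in 𝓝 0, |s| < min t (1 - t) := by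
    have h : 0 < min t (1 - t) := lt_min ht0 (by linarith)
    simpa using eventually_abs_sub_lt 0 h
  filter_upwards [eventually_nhdsWithin_of_eventually_nhds hev, self_mem_nhdsWithin]
    with s hsmall hs0
  have hs0' : s ≠ 0 := hs0
  have hslt := abs_lt.mp hsmall
  have hu : t + s ∈ Set.Ioo (0:ℝ) 1 := by
    constructor
    · have := hslt.1; have := min_le_left t (1 - t); linarith
    · have := hslt.2; have := min_le_right t (1 - t); linarith
  have hgs : 0 < g s := by
    rw [hg_def]
    have h1 : 0 < t + s := hu.1
    have h2 : 0 < 1 - t - s := by have := hu.2; linarith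
    have h3 : 0 < a := ha
    positivity
  have hsqrt : Real.sqrt (t * (1 - t)) * Real.sqrt ((t + s) * (1 - (t + s))) = g s := by
    rw [hg_def, ← ha_def, ← Real.sqrt_mul ha.le]
    congr 1
    ring
  rw [hrform (t + s) hu, hsqrt]
  have hG := hgs
  revert hG
  generalize g s = G
  intro hG
  have hGne : G ≠ 0 := ne_of_gt hG
  have htne : t ≠ 0 := ne_of_gt ht0
  have h1tne : (1 : ℝ) - t ≠ 0 := by linarith
  rcases lt_or_gt_of_ne hs0' with hneg | hpos
  · rw [abs_of_neg hneg, min_eq_right (by linarith : t + s ≤ t)]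
    rw [hc_def, ha_def]
    have hsne : -s ≠ 0 := by simpa using hs0'
    field_simp
    ring
  · rw [abs_of_pos hpos, min_eq_left (by linarith : t ≤ t + s)]
    rw [hc_def, ha_def]
    field_simp
    ring
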